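/- Let G be an infinite countable locally finite group. For every increasing function f: ℝ₊ → ℝ₊ with f(x) → ∞ there exists a proper left invariant metric d_G on G such that f is not a 0-dimensional control function of (G, d_G); that is, there exist s > 0 and two points in the same s-scale connected component of G at distance greater than f(s). -/

import Mathlib

def ScaleChain {X : Type*} (d : X → X → ℝ) (s : ℝ) (U : Set X) (x y : X) : Prop :=
  ∃ (m : ℕ) (c : ℕ → X), c 0 = x ∧ c m = y ∧ (∀ i ≤ m, c i ∈ U) ∧
    ∀ i < m, d (c i) (c (i + 1)) < s

def IsControlFun {X : Type*} (d : X → X → ℝ) (n : ℕ) (D : ℝ → ℝ) : Prop :=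
  ∀ s : ℝ, 0 < s → ∃ U : Fin (n + 1) → Set X,
    (∀ x, ∃ i, x ∈ U i) ∧ ∀ i x y, ScaleChain d s (U i) x y → d x y ≤ D s

/-- Asymptotic Assouad-Nagata dimension at most `n`. -/
def ANdimLE {X : Type*} (d : X → X → ℝ) (n : ℕ) : Prop :=
  ∃ C : ℝ, 0 < C ∧ ∃ b : ℝ, IsControlFun d n (fun s => C * s + b)

/-- Asymptotic dimension at most `n`. -/
def AsdimLE {X : Type*} (d : X → X → ℝ) (n : ℕ) : Prop :=
  ∃ D : ℝ → ℝ, IsControlFun d n D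

/-- `d` is a proper left invariant metric on the group `G`. -/
def IsPLIMetric {G : Type*} [Group G] (d : G → G → ℝ) : Prop :=
  (∀ x y : G, d x y = 0 ↔ x = y) ∧ (∀ x y : G, d x y = d y x) ∧
    (∀ x y z : G, d x z ≤ d x y + d y z) ∧
    (∀ g x y : G, d (g * x) (g * y) = d x y) ∧
    ∀ K : ℝ, {g : G | d 1 g ≤ K}.Finite

/-- A group is locally finite if every finitely generated subgroup is finite. -/
def LocallyFiniteGroup (G : Type*) [Group G] : Prop :=
  ∀ s : Finset G, ((Subgroup.closure (s : Set G) : Subgroup G) : Set G).Finite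

open Filter

/-! ### Auxiliary lemmas -/

section Aux

variable {G : Type*} [Group G]

/-- Weighted word length with respect to a weight function `w`. -/
noncomputable def wlen (w : G → ℕ) (g : G) : ℕ :=
  sInf {k : ℕ | ∃ L : List G, L.prod = g ∧ (L.map w).sum = k}

lemma wlen_spec (w : G → ℕ) (g : G) :
    ∃ L : List G, L.prod = g ∧ (L.map w).sum = wlen w g :=
  Nat.sInf_mem (⟨w g, [g], by simp, by simp⟩ :
    Set.Nonempty {k : ℕ | ∃ L : List G, L.prod = g ∧ (L.map w).sum = k})

lemma wlen_le (w : G → ℕ) {g : G} (L : List G) (h : L.prod = g) :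
    wlen w g ≤ (L.map w).sum :=
  Nat.sInf_le ⟨L, h, rfl⟩

lemma wlen_le_w (w : G → ℕ) (g : G) : wlen w g ≤ w g := by
  simpa using wlen_le w [g] (by simp)

lemma wlen_one (w : G → ℕ) : wlen w 1 = 0 :=
  Nat.le_zero.mp (by simpa using wlen_le w ([] : List G) (by simp))

lemma wlen_mul (w : G → ℕ) (g h : G) : wlen w (g * h) ≤ wlen w g + wlen w h := by
  obtain ⟨L1, hp1, hs1⟩ := wlen_spec w g
  obtain ⟨L2, hp2, hs2⟩ := wlen_spec w h
  calc wlen w (g * h) ≤ ((L1 ++ L2).map w).sum :=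
        wlen_le w _ (by rw [List.prod_append, hp1, hp2])
    _ = wlen w g + wlen w h := by rw [List.map_append, List.sum_append, hs1, hs2]

lemma wlen_inv_le (w : G → ℕ) (hw : ∀ x : G, w x⁻¹ = w x) (g : G) :
    wlen w g⁻¹ ≤ wlen w g := by
  obtain ⟨L, hp, hs⟩ := wlen_spec w g
  have hp' : ((L.map fun x => x⁻¹).reverse).prod = g⁻¹ := by
    rw [← List.prod_inv_reverse, hp]
  calc wlen w g⁻¹ ≤ (((L.map fun x => x⁻¹).reverse).map w).sum := wlen_le w _ hp'
    _ = wlen w g := by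
        rw [List.map_reverse, List.sum_reverse, List.map_map]
        have hfun : (w ∘ fun x : G => x⁻¹) = w := funext fun x => hw x
        rw [hfun, hs]

lemma wlen_inv (w : G → ℕ) (hw : ∀ x : G, w x⁻¹ = w x) (g : G) :
    wlen w g⁻¹ = wlen w g :=
  le_antisymm (wlen_inv_le w hw g) (by simpa using wlen_inv_le w hw g⁻¹)

lemma wlen_eq_zero (w : G → ℕ) (hw : ∀ x : G, x ≠ 1 → 1 ≤ w x) {g : G}
    (h : wlen w g = 0) : g = 1 := by
  obtain ⟨L, hp, hs⟩ := wlen_spec w g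
  rw [h, List.sum_eq_zero_iff] at hs
  have : ∀ x ∈ L, x = 1 := by
    intro x hx
    by_contra hx1
    have h1 : 1 ≤ w x := hw x hx1
    have h0 : w x = 0 := hs (w x) (List.mem_map_of_mem (f := w) hx)
    omega
  rw [← hp, List.prod_eq_one this]

/-- Padding a list to a function on `Fin D` does not change the product. -/
lemma prod_ofFn_getD {M : Type*} [Monoid M] :
    ∀ (D : ℕ) (L : List M), L.length ≤ D →
      (List.ofFn fun i : Fin D => L.getD i 1).prod = L.prod := by
  intro D
  induction D with
  | zero =>
      intro L hL
      have : L = [] := List.length_eq_zero_iff.mp (Nat.le_zero.mp hL)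
      subst this; simp
  | succ D ih =>
      intro L hL
      cases L with
      | nil => simp
      | cons a L =>
          rw [List.ofFn_succ]
          have h0 : (a :: L).getD ((0 : Fin (D + 1)) : ℕ) 1 = a := by
            simp
          have hsucc : (fun i : Fin D =>
              (a :: L).getD ((i.succ : Fin (D + 1)) : ℕ) 1) =
              fun i : Fin D => L.getD i 1 := by
            funext i
            rw [Fin.val_succ, List.getD_cons_succ]
          rw [h0, hsucc, List.prod_cons, List.prod_cons,
            ih L (by simpa using Nat.succ_le_succ_iff.mp hL)]

lemma prod_filter_ne_one {M : Type*} [Monoid M] [DecidableEq M] (L : List M) :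
    (L.filter (fun x => x ≠ 1)).prod = L.prod := by
  induction L with
  | nil => simp
  | cons a L ih =>
      rw [List.filter_cons]
      by_cases ha : a = 1
      · rw [if_neg (by simp [ha]), ih, ha, List.prod_cons, one_mul]
      · rw [if_pos (by simp [ha]), List.prod_cons, List.prod_cons, ih]

lemma length_filter_le {G : Type*} [Group G] (w : G → ℕ) (hw : ∀ x : G, x ≠ 1 → 1 ≤ w x)
    [DecidableEq G] (L : List G) :
    (L.filter (fun x => x ≠ 1)).length ≤ (L.map w).sum := by
  induction L with
  | nil => simp
  | cons a L ih =>
      rw [List.filter_cons, List.map_cons, List.sum_cons]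
      by_cases ha : a = 1
      · rw [if_neg (by simp [ha])]
        omega
      · rw [if_pos (by simp [ha]), List.length_cons]
        have h1 : 1 ≤ w a := hw a ha
        omega

lemma two_mul_card_le {G : Type*} [Group G] {H K : Subgroup G} (hlt : H < K)
    (hfin : (K : Set G).Finite) :
    2 * Nat.card H ≤ Nat.card K := by
  have hKfin : Finite K := hfin.to_subtype
  have hHfin : Finite H := (hfin.subset hlt.le).to_subtype
  have hdvd : Nat.card H ∣ Nat.card K := Subgroup.card_dvd_of_le hlt.le
  have hpos : 0 < Nat.card H := Nat.card_pos
  have hssub : (H : Set G) ⊂ (K : Set G) := by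
    rw [Set.ssubset_iff_of_subset hlt.le]
    obtain ⟨x, hxK, hxH⟩ := SetLike.exists_of_lt hlt
    exact ⟨x, hxK, hxH⟩
  have hltc : Nat.card H < Nat.card K := by
    have h1 : Nat.card H = (H : Set G).ncard := by
      rw [← Nat.card_coe_set_eq]; rfl
    have h2 : Nat.card K = (K : Set G).ncard := by
      rw [← Nat.card_coe_set_eq]; rfl
    rw [h1, h2]
    exact Set.ncard_lt_ncard hssub hfin
  obtain ⟨q, hq⟩ := hdvd
  have hq2 : 2 ≤ q := by
    rcases Nat.lt_or_ge q 2 with h | h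
    · exfalso
      interval_cases q <;> omega
    · exact h
  rw [hq, Nat.mul_comm 2 (Nat.card ↥H)]
  exact Nat.mul_le_mul_left _ hq2

end Aux

/-- On an infinite countable locally finite group, for every increasing `f` tending to
infinity there is a proper left invariant metric for which `f` fails to be a
`0`-dimensional control function. -/
theorem exists_metric_defeating_zero_control {G : Type*} [Group G] [Countable G]
    [Infinite G] (hLF : LocallyFiniteGroup G)
    (f : ℝ → ℝ) (hf : Monotone f) (hft : Tendsto f atTop atTop) :
    ∃ d : G → G → ℝ, IsPLIMetric d ∧ ¬ IsControlFun d 0 f := by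
  classical
  -- the target bound
  set D : ℕ := ⌈f 2⌉₊ with hD
  have hfD : f 2 ≤ (D : ℝ) := Nat.le_ceil _
  -- choose m with (2m+1)^D < 2^m and 1 ≤ m
  obtain ⟨m, hm2, hm1⟩ : ∃ m : ℕ, (2 * m + 1) ^ D < 2 ^ m ∧ 1 ≤ m := by
    have h0 : (0 : ℝ) < 1 / 3 ^ D := by positivity
    have hev := (tendsto_pow_const_div_const_pow_of_one_lt D
      (by norm_num : (1 : ℝ) < 2)).eventually_lt_const h0
    obtain ⟨n, hn, hn1⟩ := (hev.and (eventually_ge_atTop 1)).exists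
    refine ⟨n, ?_, hn1⟩
    have h2pos : (0 : ℝ) < 2 ^ n := by positivity
    have h3pos : (0 : ℝ) < 3 ^ D := by positivity
    have hkey : ((2 * n + 1 : ℕ) : ℝ) ^ D < (2 : ℝ) ^ n := by
      have hle : ((2 * n + 1 : ℕ) : ℝ) ≤ 3 * (n : ℝ) := by
        push_cast
        have : (1 : ℝ) ≤ (n : ℝ) := by exact_mod_cast hn1
        linarith
      have h1 : ((2 * n + 1 : ℕ) : ℝ) ^ D ≤ (3 * (n : ℝ)) ^ D :=
        pow_le_pow_left₀ (by positivity) hle D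
      have h2 : (3 * (n : ℝ)) ^ D = 3 ^ D * (n : ℝ) ^ D := by ring
      have h3 : (n : ℝ) ^ D < 2 ^ n / 3 ^ D := by
        have := hn
        rw [div_lt_div_iff₀ h2pos (by norm_num : (0:ℝ) < 3 ^ D)] at this
        calc (n : ℝ) ^ D = (n : ℝ) ^ D := rfl
          _ < 2 ^ n / 3 ^ D := by
            rw [lt_div_iff₀ h3pos]
            nlinarith [hn, h2pos, h3pos]
      calc ((2 * n + 1 : ℕ) : ℝ) ^ D ≤ 3 ^ D * (n : ℝ) ^ D := by rw [← h2]; exact h1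
        _ < 3 ^ D * (2 ^ n / 3 ^ D) := by
            exact (mul_lt_mul_iff_right₀ h3pos).mpr h3
        _ = 2 ^ n := by field_simp
    exact_mod_cast hkey
  -- a surjective enumeration of G
  obtain ⟨e, he⟩ := exists_surjective_nat G
  -- the exhausting chain of finite subgroups
  set H : ℕ → Subgroup G := fun n => Subgroup.closure (((Finset.range n).image e : Finset G) : Set G)
    with hHdef
  have hHfin : ∀ n, ((H n : Subgroup G) : Set G).Finite := fun n => hLF _
  have hHmono : ∀ {a b : ℕ}, a ≤ b → H a ≤ H b := by
    intro a b hab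
    apply Subgroup.closure_mono
    intro x hx
    simp only [Finset.coe_image, Finset.coe_range, Set.mem_image] at hx ⊢
    obtain ⟨i, hi, hix⟩ := hx
    exact ⟨i, lt_of_lt_of_le hi hab, hix⟩
  have hHex : ∀ g : G, ∃ n, g ∈ H n := by
    intro g
    obtain ⟨k, hk⟩ := he g
    refine ⟨k + 1, Subgroup.subset_closure ?_⟩
    simp only [Finset.coe_image, Finset.coe_range, Set.mem_image]
    exact ⟨k, Nat.lt_succ_self k, hk⟩
  set nIdx : G → ℕ := fun g => Nat.find (hHex g) with hnIdx
  have hnIdx_spec : ∀ g, g ∈ H (nIdx g) := fun g => Nat.find_spec (hHex g)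
  have hnIdx_le : ∀ g n, g ∈ H n → nIdx g ≤ n := fun g n hn => Nat.find_le hn
  have hnIdx_inv : ∀ g : G, nIdx g⁻¹ = nIdx g := by
    have key : ∀ g : G, nIdx g⁻¹ ≤ nIdx g := fun g =>
      hnIdx_le _ _ (inv_mem (hnIdx_spec g))
    intro g
    refine le_antisymm (key g) ?_
    have := key g⁻¹
    rwa [inv_inv] at this
  -- the increasing chain of finite subgroups via chosen new elements
  have hex : ∀ s : Finset G, ∃ g : G, g ∉ Subgroup.closure (s : Set G) := by
    intro s
    obtain ⟨g, hg⟩ := (hLF s).infinite_compl.nonempty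
    exact ⟨g, hg⟩
  choose nxt hnxt using hex
  set A : ℕ → Finset G := fun n => Nat.rec ∅ (fun _ s => insert (nxt s) s) n with hAdef
  have hAsucc : ∀ n, A (n + 1) = insert (nxt (A n)) (A n) := fun n => rfl
  have hAcard : ∀ n, (A n).card ≤ n := by
    intro n
    induction n with
    | zero => simp [hAdef]
    | succ n ih =>
        rw [hAsucc n]
        calc (insert (nxt (A n)) (A n)).card ≤ (A n).card + 1 := Finset.card_insert_le _ _
          _ ≤ n + 1 := by omega
  have hcard : ∀ n, 2 ^ n ≤ Nat.card (Subgroup.closure ((A n : Finset G) : Set G)) := by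
    intro n
    induction n with
    | zero =>
        have : Finite (Subgroup.closure ((A 0 : Finset G) : Set G)) :=
          (hLF (A 0)).to_subtype
        simpa using Nat.one_le_iff_ne_zero.mpr Nat.card_pos.ne'
    | succ n ih =>
        have hlt : Subgroup.closure ((A n : Finset G) : Set G) <
            Subgroup.closure ((A (n + 1) : Finset G) : Set G) := by
          refine lt_of_le_of_ne (Subgroup.closure_mono ?_) ?_
          · rw [hAsucc n]; exact_mod_cast Finset.subset_insert _ _
          · intro heq
            apply hnxt (A n)
            rw [heq]
            apply Subgroup.subset_closure
            rw [hAsucc n]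
            exact_mod_cast Finset.mem_insert_self _ _
        have h2 := two_mul_card_le hlt (hLF _)
        calc 2 ^ (n + 1) = 2 * 2 ^ n := by ring
          _ ≤ 2 * Nat.card (Subgroup.closure ((A n : Finset G) : Set G)) := by omega
          _ ≤ _ := h2
  -- the symmetric generating set
  set S : Finset G := A m ∪ (A m).image (fun x => x⁻¹) with hSdef
  have hS_inv : ∀ x : G, x⁻¹ ∈ S ↔ x ∈ S := by
    intro x
    simp only [hSdef, Finset.mem_union, Finset.mem_image]
    constructor
    · rintro (h | ⟨y, hy, hyx⟩)
      · exact Or.inr ⟨x⁻¹, h, inv_inv x⟩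
      · have : y = x := by rw [← inv_inv y, hyx, inv_inv]
        exact Or.inl (this ▸ hy)
    · rintro (h | ⟨y, hy, hyx⟩)
      · exact Or.inr ⟨x, h, rfl⟩
      · exact Or.inl (by rw [← hyx, inv_inv]; exact hy)
  have hScard : S.card ≤ 2 * m := by
    calc S.card ≤ (A m).card + ((A m).image (fun x => x⁻¹)).card := Finset.card_union_le _ _
      _ ≤ (A m).card + (A m).card := by
          have := Finset.card_image_le (s := A m) (f := fun x : G => x⁻¹)
          omega
      _ ≤ 2 * m := by have := hAcard m; omega
  -- the weight function
  set w : G → ℕ := fun g => if g = 1 then 0 else if g ∈ S then 1 else (D + 1) + nIdx g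
    with hwdef
  have hw_inv : ∀ x : G, w x⁻¹ = w x := by
    intro x
    simp only [hwdef]
    by_cases hx1 : x = 1
    · subst hx1; simp
    · have hx1' : x⁻¹ ≠ 1 := by simpa using hx1
      rw [if_neg hx1', if_neg hx1]
      simp only [propext (hS_inv x), hnIdx_inv]
  have hw_pos : ∀ x : G, x ≠ 1 → 1 ≤ w x := by
    intro x hx
    simp only [hwdef, if_neg hx]
    split <;> omega
  have hw_one : w 1 = 0 := by simp [hwdef]
  have hwS : ∀ x : G, x ∈ S → w x ≤ 1 := by
    intro x hx
    by_cases hx1 : x = 1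
    · simp [hwdef, hx1]
    · simp [hwdef, hx1, hx]
  -- the metric
  refine ⟨fun x y => ((wlen w (x⁻¹ * y) : ℕ) : ℝ), ⟨?_, ?_, ?_, ?_, ?_⟩, ?_⟩
  · -- zero iff equal
    intro x y
    show ((wlen w (x⁻¹ * y) : ℕ) : ℝ) = 0 ↔ x = y
    rw [Nat.cast_eq_zero]
    constructor
    · intro h
      have := wlen_eq_zero w hw_pos h
      rwa [inv_mul_eq_one] at this
    · intro h; subst h; rw [inv_mul_cancel]; exact wlen_one w
  · -- symmetric
    intro x y
    show ((wlen w (x⁻¹ * y) : ℕ) : ℝ) = ((wlen w (y⁻¹ * x) : ℕ) : ℝ)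
    have h : y⁻¹ * x = (x⁻¹ * y)⁻¹ := by group
    rw [h, wlen_inv w hw_inv]
  · -- triangle
    intro x y z
    show ((wlen w (x⁻¹ * z) : ℕ) : ℝ) ≤
      ((wlen w (x⁻¹ * y) : ℕ) : ℝ) + ((wlen w (y⁻¹ * z) : ℕ) : ℝ)
    have h : x⁻¹ * z = (x⁻¹ * y) * (y⁻¹ * z) := by group
    rw [h]
    exact_mod_cast wlen_mul w (x⁻¹ * y) (y⁻¹ * z)
  · -- left invariance
    intro g x y
    show ((wlen w ((g * x)⁻¹ * (g * y)) : ℕ) : ℝ) = ((wlen w (x⁻¹ * y) : ℕ) : ℝ)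
    have h : (g * x)⁻¹ * (g * y) = x⁻¹ * y := by group
    rw [h]
  · -- properness
    intro K
    set K' : ℕ := ⌈K⌉₊ with hK'
    set M : ℕ := (S.sup nIdx) ⊔ K' with hM
    apply Set.Finite.subset (hHfin M)
    intro g hg
    simp only [Set.mem_setOf_eq] at hg
    have hg' : ((wlen w g : ℕ) : ℝ) ≤ K := by
      have : ((wlen w ((1 : G)⁻¹ * g) : ℕ) : ℝ) ≤ K := hg
      rwa [inv_one, one_mul] at this
    have hgK : wlen w g ≤ K' := by
      have h1 : ((wlen w g : ℕ) : ℝ) ≤ (K' : ℝ) := le_trans hg' (Nat.le_ceil K)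
      exact_mod_cast h1
    obtain ⟨L, hp, hs⟩ := wlen_spec w g
    have hmem : ∀ x ∈ L, x ∈ H M := by
      intro x hx
      by_cases hx1 : x = 1
      · subst hx1; exact one_mem _
      by_cases hxS : x ∈ S
      · have h1 : nIdx x ≤ S.sup nIdx := Finset.le_sup hxS
        exact hHmono (le_trans h1 le_sup_left) (hnIdx_spec x)
      · have hwx : w x = (D + 1) + nIdx x := by
          simp only [hwdef, if_neg hx1, if_neg hxS]
        have hxsum : w x ≤ (L.map w).sum :=
          List.single_le_sum (fun a _ => Nat.zero_le a) _ (List.mem_map_of_mem (f := w) hx)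
        have : nIdx x ≤ K' := by omega
        exact hHmono (le_trans this le_sup_right) (hnIdx_spec x)
    rw [← hp]
    exact SetLike.mem_coe.mpr (Subgroup.list_prod_mem _ hmem)
  · -- f is not a 0-dimensional control function
    intro hC
    obtain ⟨U, hcov, hctrl⟩ := hC 2 (by norm_num)
    have hU0 : ∀ x : G, x ∈ U 0 := by
      intro x
      obtain ⟨i, hi⟩ := hcov x
      rwa [Fin.fin_one_eq_zero i] at hi
    -- the finite set of short products
    set PF : Finset G := Finset.image (fun v : Fin D → G => (List.ofFn v).prod)
      (Fintype.piFinset fun _ : Fin D => insert (1 : G) S) with hPF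
    have hPFcard : PF.card ≤ (2 * m + 1) ^ D := by
      calc PF.card ≤ (Fintype.piFinset fun _ : Fin D => insert (1 : G) S).card :=
            Finset.card_image_le
        _ = (insert (1 : G) S).card ^ D := by
            rw [Fintype.card_piFinset]
            simp
        _ ≤ (2 * m + 1) ^ D := by
            apply Nat.pow_le_pow_left
            have h1 : (insert (1 : G) S).card ≤ S.card + 1 := Finset.card_insert_le _ _
            omega
    -- pick an element of the big subgroup not representable by a short product
    have hCfin := hLF (A m)
    set C : Finset G := hCfin.toFinset with hCdef
    have hCcard : (2 : ℕ) ^ m ≤ C.card := by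
      have h1 := hcard m
      have h2 : Nat.card (Subgroup.closure ((A m : Finset G) : Set G)) =
          ((Subgroup.closure ((A m : Finset G) : Set G) : Subgroup G) : Set G).ncard := by
        rw [← Nat.card_coe_set_eq]; rfl
      rw [h2, Set.ncard_eq_toFinset_card _ hCfin] at h1
      exact h1
    obtain ⟨gs, hgsC, hgsPF⟩ : ∃ gs ∈ C, gs ∉ PF := by
      rw [← Finset.not_subset]
      intro hsub
      have := Finset.card_le_card hsub
      have := hPFcard
      have := hCcard
      omega
    have hgs_mem : gs ∈ Subgroup.closure ((A m : Finset G) : Set G) := by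
      have := hgsC
      rw [hCdef, Set.Finite.mem_toFinset] at this
      exact this
    -- a word for gs in the symmetric generating set S
    obtain ⟨L, hLS, hLp⟩ : ∃ L : List G, (∀ y ∈ L, y ∈ S) ∧ L.prod = gs := by
      have h1 : gs ∈ (Subgroup.closure ((A m : Finset G) : Set G)).toSubmonoid := hgs_mem
      rw [Subgroup.closure_toSubmonoid] at h1
      obtain ⟨L, hL, hLp⟩ := Submonoid.exists_list_of_mem_closure h1
      refine ⟨L, ?_, hLp⟩
      intro y hy
      rcases hL y hy with h | h
      · exact Finset.mem_union_left _ (Finset.mem_coe.mp h)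
      · rw [Set.mem_inv] at h
        rw [← inv_inv y]
        exact (hS_inv y⁻¹).mpr (Finset.mem_union_left _ (Finset.mem_coe.mp h))
    -- the chain from 1 to gs
    have hchain : ScaleChain (fun x y => ((wlen w (x⁻¹ * y) : ℕ) : ℝ)) 2 (U 0) 1 gs := by
      refine ⟨L.length, fun i => (L.take i).prod, by simp, by simp [hLp], fun i _ => hU0 _, ?_⟩
      intro i hi
      show ((wlen w (((L.take i).prod)⁻¹ * (L.take (i + 1)).prod) : ℕ) : ℝ) < 2
      have hstep : ((L.take i).prod)⁻¹ * (L.take (i + 1)).prod = L[i] := by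
        rw [List.prod_take_succ L i hi]
        group
      rw [hstep]
      have h1 : wlen w L[i] ≤ 1 := by
        calc wlen w L[i] ≤ w L[i] := wlen_le_w w _
          _ ≤ 1 := hwS _ (hLS _ (List.getElem_mem hi))
      have : ((wlen w L[i] : ℕ) : ℝ) ≤ 1 := by exact_mod_cast h1
      linarith
    have hbound : ((wlen w gs : ℕ) : ℝ) ≤ f 2 := by
      have h0 := hctrl 0 1 gs hchain
      have h1 : ((wlen w ((1 : G)⁻¹ * gs) : ℕ) : ℝ) ≤ f 2 := h0
      rwa [inv_one, one_mul] at h1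
    -- lower bound on the length of gs
    have hlong : D + 1 ≤ wlen w gs := by
      by_contra hcon
      push_neg at hcon
      have hle : wlen w gs ≤ D := by omega
      obtain ⟨L', hp', hs'⟩ := wlen_spec w gs
      have hsum : (L'.map w).sum ≤ D := by omega
      have hentry : ∀ x ∈ L', x = 1 ∨ x ∈ S := by
        intro x hx
        by_contra hxc
        push_neg at hxc
        have hwx : w x = (D + 1) + nIdx x := by
          simp only [hwdef, if_neg hxc.1, if_neg hxc.2]
        have : w x ≤ (L'.map w).sum :=
          List.single_le_sum (fun a _ => Nat.zero_le a) _ (List.mem_map_of_mem (f := w) hx)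
        omega
      set L'' : List G := L'.filter (fun x => x ≠ 1) with hL''
      have hp'' : L''.prod = gs := by rw [hL'', prod_filter_ne_one, hp']
      have hlen'' : L''.length ≤ D := le_trans (length_filter_le w hw_pos L') hsum
      have hmem'' : ∀ x ∈ L'', x ∈ S := by
        intro x hx
        rw [hL'', List.mem_filter] at hx
        rcases hentry x hx.1 with h | h
        · exfalso
          have := hx.2
          simp [h] at this
        · exact h
      -- gs is a product of at most D elements of S, contradiction
      apply hgsPF
      rw [hPF, Finset.mem_image]
      refine ⟨fun i : Fin D => L''.getD i 1, ?_, ?_⟩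
      · rw [Fintype.mem_piFinset]
        intro i
        by_cases h : (i : ℕ) < L''.length
        · rw [List.getD_eq_getElem _ _ h]
          exact Finset.mem_insert_of_mem (hmem'' _ (List.getElem_mem h))
        · rw [List.getD_eq_default _ _ (by omega)]
          exact Finset.mem_insert_self _ _
      · rw [prod_ofFn_getD D L'' hlen'', hp'']
    have hgt : (D : ℝ) + 1 ≤ ((wlen w gs : ℕ) : ℝ) := by exact_mod_cast hlong
    linarith
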